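/- arXiv:1808.08030 — 2 statements merged into one kernel-verified Lean document; each statement's English description precedes it below -/
import Mathlib

section
/- Let A be an n×n Bott matrix over ℤ/2 and, in the ring R = ℤ/2[x₁,…,xₙ]/(x_j² − x_j·∑ᵢ A_{ij}xᵢ), set y_j = ∑ᵢ A_{ij} xᵢ for j = 1,…,n. Then for each j, y_j² = y_j·∑ᵢ A_{ij}(∑_l A_{li} x_l) can be expanded so that the total Stiefel-Whitney class w = ∏_{j=1}ⁿ (1 + y_j) lies in the subspace of R spanned by square-free monomials. -/
open MvPolynomial

noncomputable def bottRel {n : ℕ} (A : Matrix (Fin n) (Fin n) (ZMod 2)) (j : Fin n) :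
    MvPolynomial (Fin n) (ZMod 2) :=
  X j ^ 2 - X j * ∑ i, C (A i j) * X i

noncomputable def bottIdeal {n : ℕ} (A : Matrix (Fin n) (Fin n) (ZMod 2)) :
    Ideal (MvPolynomial (Fin n) (ZMod 2)) :=
  Ideal.span (Set.range (bottRel A))

namespace BottAux

variable {n : ℕ}

/-- weight of an exponent vector -/
def W (m : Fin n →₀ ℕ) : ℕ := ∑ i, m i * 2 ^ (i : ℕ)

lemma W_add (a b : Fin n →₀ ℕ) : W (a + b) = W a + W b := by
  simp [W, add_mul, Finset.sum_add_distrib]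

lemma W_single (j : Fin n) (k : ℕ) : W (Finsupp.single j k) = k * 2 ^ (j : ℕ) := by
  simp [W, Finsupp.single_apply]

lemma mk_smul (A : Matrix (Fin n) (Fin n) (ZMod 2)) (c : ZMod 2)
    (q : MvPolynomial (Fin n) (ZMod 2)) :
    Ideal.Quotient.mk (bottIdeal A) (c • q) = c • Ideal.Quotient.mk (bottIdeal A) q := by
  exact map_smul (Ideal.Quotient.mkₐ (ZMod 2) (bottIdeal A)) c q

lemma mk_sq (A : Matrix (Fin n) (Fin n) (ZMod 2)) (j : Fin n) :
    Ideal.Quotient.mk (bottIdeal A) (X j ^ 2) =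
      Ideal.Quotient.mk (bottIdeal A) (X j * ∑ i, C (A i j) * X i) := by
  have h : bottRel A j ∈ bottIdeal A := Ideal.subset_span ⟨j, rfl⟩
  exact Ideal.Quotient.eq.2 h

lemma mono_mem (A : Matrix (Fin n) (Fin n) (ZMod 2))
    (hA : ∀ i j : Fin n, j ≤ i → A i j = 0) (m : Fin n →₀ ℕ) :
    Ideal.Quotient.mk (bottIdeal A) (monomial m 1) ∈
      Submodule.span (ZMod 2)
        (Set.range fun s : Finset (Fin n) =>
          Ideal.Quotient.mk (bottIdeal A) (∏ i ∈ s, X i)) := by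
  suffices H : ∀ N, ∀ m : Fin n →₀ ℕ, W m ≤ N →
      Ideal.Quotient.mk (bottIdeal A) (monomial m 1) ∈
        Submodule.span (ZMod 2)
          (Set.range fun s : Finset (Fin n) =>
            Ideal.Quotient.mk (bottIdeal A) (∏ i ∈ s, X i)) from H (W m) m le_rfl
  intro N
  induction N using Nat.strong_induction_on with
  | _ N ih =>
    intro m hm
    by_cases hsq : ∀ i, m i ≤ 1
    · -- square free
      have hmono : (monomial m 1 : MvPolynomial (Fin n) (ZMod 2)) = ∏ i ∈ m.support, X i := by
        rw [monomial_eq, C_1, one_mul, Finsupp.prod]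
        refine Finset.prod_congr rfl fun i hi => ?_
        have h1 : m i = 1 :=
          le_antisymm (hsq i) (Nat.one_le_iff_ne_zero.2 (Finsupp.mem_support_iff.1 hi))
        rw [h1, pow_one]
      rw [hmono]
      exact Submodule.subset_span ⟨m.support, rfl⟩
    · push_neg at hsq
      obtain ⟨j, hj⟩ := hsq
      have hj2 : 2 ≤ m j := hj
      set m' : Fin n →₀ ℕ := m - Finsupp.single j 2 with hm'
      have hsum : m' + Finsupp.single j 2 = m := by
        ext i
        by_cases hij : i = j
        · subst hij
          simp [hm', Finsupp.single_apply, Nat.sub_add_cancel hj2]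
        · simp [hm', Finsupp.single_apply, Ne.symm hij, hij]
      have hWm : W m = W m' + 2 * 2 ^ (j : ℕ) := by
        rw [← hsum, W_add, W_single]
      -- decompose the monomial
      have hdec : (monomial m 1 : MvPolynomial (Fin n) (ZMod 2)) =
          monomial m' 1 * X j ^ 2 := by
        rw [X_pow_eq_monomial, monomial_mul, one_mul, hsum]
      rw [hdec]
      have key : Ideal.Quotient.mk (bottIdeal A) (monomial m' 1 * X j ^ 2)
          = ∑ i, Ideal.Quotient.mk (bottIdeal A)
              (monomial m' 1 * (X j * (C (A i j) * X i))) := by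
        rw [map_mul, mk_sq A j, ← map_mul]
        simp_rw [Finset.mul_sum]
        rw [map_sum]
      rw [key]
      refine Submodule.sum_mem _ fun i _ => ?_
      have hterm : (monomial m' 1 : MvPolynomial (Fin n) (ZMod 2)) * (X j * (C (A i j) * X i)) =
          A i j • monomial (m' + Finsupp.single j 1 + Finsupp.single i 1) 1 := by
        simp only [smul_monomial, smul_eq_mul, mul_one, X, C_mul_monomial,
          monomial_mul, one_mul]
        rw [add_assoc]
      rw [hterm, mk_smul]
      by_cases hz : A i j = 0
      · rw [hz, zero_smul]; exact Submodule.zero_mem _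
      · refine Submodule.smul_mem _ _ ?_
        have hij : i < j := by
          by_contra hle
          exact hz (hA i j (not_lt.1 hle))
        have hWnew : W (m' + Finsupp.single j 1 + Finsupp.single i 1) < W m := by
          rw [W_add, W_add, W_single, W_single, hWm, one_mul, one_mul]
          have : (2 : ℕ) ^ (i : ℕ) < 2 ^ (j : ℕ) :=
            Nat.pow_lt_pow_right (by norm_num) hij
          omega
        rcases Nat.lt_or_ge N 1 with hN | hN
        · -- N = 0 : impossible since W new < W m ≤ 0
          omega
        · exact ih (N - 1) (by omega) _ (by omega)

end BottAux

/-- The total Stiefel-Whitney class ∏ⱼ (1 + yⱼ), with yⱼ = ∑ᵢ Aᵢⱼ xᵢ, lies in the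
span of the square-free monomials in R. -/
theorem stmt3 {n : ℕ} (A : Matrix (Fin n) (Fin n) (ZMod 2))
    (hA : ∀ i j : Fin n, j ≤ i → A i j = 0) :
    Ideal.Quotient.mk (bottIdeal A) (∏ j, (1 + ∑ i, C (A i j) * X i)) ∈
      Submodule.span (ZMod 2)
        (Set.range fun s : Finset (Fin n) =>
          Ideal.Quotient.mk (bottIdeal A) (∏ i ∈ s, X i)) := by
  set p : MvPolynomial (Fin n) (ZMod 2) := ∏ j, (1 + ∑ i, C (A i j) * X i) with hp
  have hps := congrArg (Ideal.Quotient.mk (bottIdeal A)) p.as_sum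
  rw [map_sum] at hps
  rw [hps]
  refine Submodule.sum_mem _ fun v _ => ?_
  have : (monomial v (coeff v p) : MvPolynomial (Fin n) (ZMod 2)) =
      coeff v p • monomial v 1 := by
    rw [smul_monomial, smul_eq_mul, mul_one]
  rw [this, BottAux.mk_smul]
  exact Submodule.smul_mem _ _ (BottAux.mono_mem A hA v)
end

section
/- Let A be an n×n Bott matrix over ℤ/2, and for a subset S ⊆ {1,…,n} let A_S denote the matrix obtained from A by replacing all rows with index not in S by zero rows. Define y_j(B) = ∑ᵢ B_{ij} xᵢ for a Bott matrix B, working in the free polynomial ring ℤ/2[x₁,…,xₙ]. Then the multilinear part (the sum of the square-free monomial terms) of σ_{2k}(y₁(A),…,yₙ(A)) equals the sum over all subsets S = {i₁ < ⋯ < i_{2k}} of size 2k of the multilinear part of σ_{2k}(y₁(A_S),…,yₙ(A_S)). -/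
open MvPolynomial

/-- The m-th elementary symmetric function evaluated at a family of polynomials. -/
noncomputable def esymmAt {n : ℕ} (m : ℕ) (y : Fin n → MvPolynomial (Fin n) (ZMod 2)) :
    MvPolynomial (Fin n) (ZMod 2) :=
  ∑ s ∈ Finset.univ.powersetCard m, ∏ j ∈ s, y j

/-- The multilinear part of a polynomial: the sum of its square-free monomial terms. -/
noncomputable def mlin {n : ℕ} (p : MvPolynomial (Fin n) (ZMod 2)) :
    MvPolynomial (Fin n) (ZMod 2) :=
  ∑ s : Finset (Fin n),
    monomial (∑ i ∈ s, Finsupp.single i 1) (p.coeff (∑ i ∈ s, Finsupp.single i 1))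

/-- The linear forms yⱼ = ∑ᵢ Bᵢⱼ xᵢ attached to a Bott matrix B. -/
noncomputable def yOf {n : ℕ} (B : Matrix (Fin n) (Fin n) (ZMod 2)) (j : Fin n) :
    MvPolynomial (Fin n) (ZMod 2) :=
  ∑ i, C (B i j) * X i

/-- The matrix A with all rows outside S replaced by zero. -/
def rowRestrict {n : ℕ} (A : Matrix (Fin n) (Fin n) (ZMod 2)) (S : Finset (Fin n)) :
    Matrix (Fin n) (Fin n) (ZMod 2) :=
  fun i j => if i ∈ S then A i j else 0

open Finset

variable {n : ℕ}

noncomputable def dT (T : Finset (Fin n)) : Fin n →₀ ℕ := ∑ i ∈ T, Finsupp.single i 1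

lemma dT_def (T : Finset (Fin n)) :
    (∑ i ∈ T, Finsupp.single i 1 : Fin n →₀ ℕ) = dT T := rfl

lemma dT_apply (T : Finset (Fin n)) (i : Fin n) : dT T i = if i ∈ T then 1 else 0 := by
  classical
  simp [dT, Finsupp.finset_sum_apply, Finsupp.single_apply, Finset.sum_ite_eq']

lemma prod_monomial' {ι : Type*} (s : Finset ι) (u : ι → Fin n →₀ ℕ) (a : ι → ZMod 2) :
    ∏ j ∈ s, (monomial (u j) (a j) : MvPolynomial (Fin n) (ZMod 2))
      = monomial (∑ j ∈ s, u j) (∏ j ∈ s, a j) := by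
  classical
  induction s using Finset.cons_induction with
  | empty => simp
  | cons i s hi ih =>
      rw [Finset.prod_cons, Finset.sum_cons, Finset.prod_cons, ih, MvPolynomial.monomial_mul]

lemma coeff_prod_yOf (B : Matrix (Fin n) (Fin n) (ZMod 2)) (s T : Finset (Fin n)) :
    MvPolynomial.coeff (dT T) (∏ j ∈ s, yOf B j)
      = ∑ g ∈ s.pi (fun _ => (univ : Finset (Fin n))),
          if (∑ j ∈ s.attach, Finsupp.single (g j.1 j.2) (1:ℕ)) = dT T
          then ∏ j ∈ s.attach, B (g j.1 j.2) j.1 else 0 := by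
  classical
  unfold yOf
  rw [Finset.prod_sum, MvPolynomial.coeff_sum]
  refine Finset.sum_congr rfl fun g hg => ?_
  simp_rw [MvPolynomial.C_mul_X_eq_monomial]
  rw [prod_monomial', MvPolynomial.coeff_monomial]

lemma sum_dT (T : Finset (Fin n)) : ∑ i, dT T i = T.card := by
  simp [dT_apply, Finset.sum_ite_mem]

lemma mass_eq {s T : Finset (Fin n)} {g : ∀ j ∈ s, Fin n}
    (h : (∑ j ∈ s.attach, Finsupp.single (g j.1 j.2) (1:ℕ)) = dT T) :
    s.card = T.card := by
  classical
  have h2 := congrArg (fun d : Fin n →₀ ℕ => ∑ i, d i) h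
  rw [sum_dT] at h2
  rw [← h2]
  simp_rw [Finsupp.finset_sum_apply]
  rw [Finset.sum_comm]
  simp [Finsupp.single_apply]

lemma cover {s T : Finset (Fin n)} {g : ∀ j ∈ s, Fin n}
    (h : (∑ j ∈ s.attach, Finsupp.single (g j.1 j.2) (1:ℕ)) = dT T)
    {i : Fin n} (hi : i ∈ T) : ∃ j ∈ s.attach, g j.1 j.2 = i := by
  classical
  have h2 := congrArg (fun d : Fin n →₀ ℕ => d i) h
  simp only [Finsupp.finset_sum_apply, dT_apply, hi, if_pos] at h2
  have hne : ∃ j ∈ s.attach, Finsupp.single (g j.1 j.2) (1:ℕ) i ≠ 0 := by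
    apply Finset.exists_ne_zero_of_sum_ne_zero
    rw [h2]; norm_num
  obtain ⟨j, hj, hne⟩ := hne
  refine ⟨j, hj, ?_⟩
  by_contra hc
  exact hne (Finsupp.single_eq_of_ne' hc)

lemma mem_T {s T : Finset (Fin n)} {g : ∀ j ∈ s, Fin n}
    (h : (∑ j ∈ s.attach, Finsupp.single (g j.1 j.2) (1:ℕ)) = dT T)
    {j : {x // x ∈ s}} (hj : j ∈ s.attach) : g j.1 j.2 ∈ T := by
  classical
  have h2 := congrArg (fun d : Fin n →₀ ℕ => d (g j.1 j.2)) h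
  simp only [Finsupp.finset_sum_apply, dT_apply] at h2
  by_contra hc
  rw [if_neg hc, Finset.sum_eq_zero_iff] at h2
  have := h2 j hj
  simp [Finsupp.single_apply] at this

lemma key (A : Matrix (Fin n) (Fin n) (ZMod 2)) (k : ℕ) (T : Finset (Fin n)) :
    MvPolynomial.coeff (dT T) (esymmAt (2*k) (yOf A)) =
      ∑ S ∈ Finset.univ.powersetCard (2*k),
        MvPolynomial.coeff (dT T) (esymmAt (2*k) (yOf (rowRestrict A S))) := by
  classical
  by_cases hT : T.card = 2*k
  · rw [Finset.sum_eq_single_of_mem T (by simp [Finset.mem_powersetCard_univ, hT])]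
    · unfold esymmAt
      rw [MvPolynomial.coeff_sum, MvPolynomial.coeff_sum]
      refine Finset.sum_congr rfl fun s hs => ?_
      rw [coeff_prod_yOf, coeff_prod_yOf]
      refine Finset.sum_congr rfl fun g hg => ?_
      split_ifs with hcond
      · refine Finset.prod_congr rfl fun j hj => ?_
        have hm := mem_T hcond hj
        simp [rowRestrict, hm]
      · rfl
    · intro S hS hST
      unfold esymmAt
      rw [MvPolynomial.coeff_sum]
      refine Finset.sum_eq_zero fun s hs => ?_
      rw [coeff_prod_yOf]
      refine Finset.sum_eq_zero fun g hg => ?_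
      split_ifs with hcond
      case neg => rfl
      have hcard : S.card = 2*k := Finset.mem_powersetCard_univ.mp hS
      have hTS : ¬ T ⊆ S := by
        intro hsub
        exact hST (Finset.eq_of_subset_of_card_le hsub (by rw [hcard, hT])).symm
      obtain ⟨i, hiT, hiS⟩ := Finset.not_subset.mp hTS
      obtain ⟨j, hj, hji⟩ := cover hcond hiT
      refine Finset.prod_eq_zero hj ?_
      rw [hji]
      simp [rowRestrict, hiS]
  · have hz : ∀ B : Matrix (Fin n) (Fin n) (ZMod 2),
        MvPolynomial.coeff (dT T) (esymmAt (2*k) (yOf B)) = 0 := by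
      intro B
      unfold esymmAt
      rw [MvPolynomial.coeff_sum]
      refine Finset.sum_eq_zero fun s hs => ?_
      rw [coeff_prod_yOf]
      refine Finset.sum_eq_zero fun g hg => ?_
      rw [if_neg]
      intro hcond
      have hm := mass_eq hcond
      have hs' := Finset.mem_powersetCard_univ.mp hs
      exact hT (by rw [← hm, hs'])
    rw [hz]
    exact (Finset.sum_eq_zero fun S _ => hz _).symm

/-- The multilinear part of σ₂ₖ(y₁(A),…,yₙ(A)) equals the sum over all size-2k subsets S
of the multilinear part of σ₂ₖ(y₁(A_S),…,yₙ(A_S)). -/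
theorem stmt6 {n k : ℕ} (A : Matrix (Fin n) (Fin n) (ZMod 2))
    (hA : ∀ i j : Fin n, j ≤ i → A i j = 0) :
    mlin (esymmAt (2 * k) (yOf A)) =
      ∑ S ∈ Finset.univ.powersetCard (2 * k),
        mlin (esymmAt (2 * k) (yOf (rowRestrict A S))) := by
  classical
  simp only [mlin, dT_def]
  rw [Finset.sum_comm]
  refine Finset.sum_congr rfl fun T _ => ?_
  rw [key A k T, map_sum]
end
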